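/- Group incentive ratio upper bound for Round-Robin: for every coalition size c ≥ 1 the following holds. Let there be n agents and m indivisible goods, let v_1, …, v_n be additive valuations, let ≻ be a profile of strict orderings with v_a consistent with ≻_a for every a, let C ⊆ [n] be a coalition with |C| ≤ c, and let ≻'_C be manipulated orderings reported by the agents in C. Then there exists an agent a ∈ C such that v_a(RR_a(≻'_C, ≻_{−C})) ≤ (c + 1)·v_a(RR_a(≻)). -/

import Mathlib

/-- A strict total ordering over goods, given as a list from most preferred to
least preferred: it must be a duplicate-free enumeration of all goods. -/
def IsOrder {γ : Type*} [Fintype γ] (l : List γ) : Prop :=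
  l.Nodup ∧ ∀ g : γ, g ∈ l

/-- An additive valuation `v` (given by its values on single goods) is consistent
with the strict ordering `l` if strictly more valuable goods appear earlier. -/
def Consistent {γ : Type*} [DecidableEq γ] (v : γ → ℝ) (l : List γ) : Prop :=
  ∀ g g' : γ, v g > v g' → l.idxOf g < l.idxOf g'

/-- State of Round-Robin after `s` stages: the set of remaining goods, together
with the bundle picked so far by each agent.  At stage `s` (0-indexed), agent
`s % n` picks his most preferred remaining good. -/
def rrState {γ : Type*} [DecidableEq γ] [Fintype γ] (n : ℕ) (hn : 0 < n)
    (pref : Fin n → List γ) : ℕ → Finset γ × (Fin n → Finset γ)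
  | 0 => (Finset.univ, fun _ => ∅)
  | s + 1 =>
    let st := rrState n hn pref s
    let agent : Fin n := ⟨s % n, Nat.mod_lt s hn⟩
    match (pref agent).find? (fun g => decide (g ∈ st.1)) with
    | none => st
    | some g => (st.1.erase g, Function.update st.2 agent (insert g (st.2 agent)))

/-- The Round-Robin allocation: the bundle of agent `a` after all goods are picked. -/
def rr {γ : Type*} [DecidableEq γ] [Fintype γ] (n : ℕ) (hn : 0 < n)
    (pref : Fin n → List γ) (a : Fin n) : Finset γ :=
  (rrState n hn pref (Fintype.card γ)).2 a

namespace RRP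

lemma find?_min {γ : Type*} [DecidableEq γ] {l : List γ} {p : γ → Bool} {g : γ}
    (h : l.find? p = some g) : ∀ g', p g' → g' ∈ l → l.idxOf g ≤ l.idxOf g' := by
  induction l with
  | nil => simp at h
  | cons hd tl ih =>
    intro g' hp hg'
    by_cases hph : p hd
    · rw [List.find?_cons_of_pos hph] at h
      cases h; simp
    · rw [List.find?_cons_of_neg hph] at h
      have hghd : g ≠ hd := by
        rintro rfl
        have := List.find?_some h
        simp [this] at hph
      have hg'hd : g' ≠ hd := by rintro rfl; simp [hp] at hph
      have hg't : g' ∈ tl := by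
        rcases List.mem_cons.mp hg' with h1 | h1
        · exact absurd h1 hg'hd
        · exact h1
      rw [List.idxOf_cons_ne _ hghd.symm, List.idxOf_cons_ne _ hg'hd.symm]
      exact Nat.succ_le_succ (ih h g' hp hg't)

variable {γ : Type*} [DecidableEq γ] [Fintype γ] {n : ℕ} (hn : 0 < n)

def ag (s : ℕ) : Fin n := ⟨s % n, Nat.mod_lt s hn⟩

variable (pref : Fin n → List γ)

lemma step_none (s : ℕ)
    (h : (pref (ag hn s)).find? (fun g => decide (g ∈ (rrState n hn pref s).1)) = none) :
    rrState n hn pref (s+1) = rrState n hn pref s := by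
  simp only [rrState, ag] at h ⊢
  rw [h]

lemma step_some (s : ℕ) {g : γ}
    (h : (pref (ag hn s)).find? (fun g => decide (g ∈ (rrState n hn pref s).1)) = some g) :
    rrState n hn pref (s+1) = ((rrState n hn pref s).1.erase g,
      Function.update (rrState n hn pref s).2 (ag hn s)
        (insert g ((rrState n hn pref s).2 (ag hn s)))) := by
  simp only [rrState, ag] at h ⊢
  rw [h]

lemma step_cases (horder : ∀ a, IsOrder (pref a)) (s : ℕ) :
    ((rrState n hn pref s).1 = ∅ ∧ rrState n hn pref (s+1) = rrState n hn pref s) ∨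
    ∃ g ∈ (rrState n hn pref s).1,
      (∀ g' ∈ (rrState n hn pref s).1,
        (pref (ag hn s)).idxOf g ≤ (pref (ag hn s)).idxOf g') ∧
      rrState n hn pref (s+1) = ((rrState n hn pref s).1.erase g,
        Function.update (rrState n hn pref s).2 (ag hn s)
          (insert g ((rrState n hn pref s).2 (ag hn s)))) := by
  cases hfind : (pref (ag hn s)).find? (fun g => decide (g ∈ (rrState n hn pref s).1)) with
  | none =>
    left
    refine ⟨?_, step_none hn pref s hfind⟩
    by_contra hne
    obtain ⟨g, hg⟩ := Finset.nonempty_iff_ne_empty.mpr hne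
    have := List.find?_eq_none.mp hfind g ((horder _).2 g)
    simp [hg] at this
  | some g =>
    right
    have hp := List.find?_some hfind
    have hmem : g ∈ (rrState n hn pref s).1 := by simpa using hp
    exact ⟨g, hmem,
      fun g' hg' => find?_min hfind g' (decide_eq_true hg') ((horder _).2 g'),
      step_some hn pref s hfind⟩

variable (horder : ∀ a, IsOrder (pref a))
include horder

lemma rem_succ_subset (s : ℕ) :
    (rrState n hn pref (s+1)).1 ⊆ (rrState n hn pref s).1 := by
  rcases step_cases hn pref horder s with ⟨he, hst⟩ | ⟨g, hg, hmin, hst⟩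
  · rw [hst]
  · rw [hst]; exact Finset.erase_subset _ _

lemma rem_anti {s t : ℕ} (h : s ≤ t) :
    (rrState n hn pref t).1 ⊆ (rrState n hn pref s).1 := by
  induction t with
  | zero => simp_all
  | succ t ih =>
    rcases Nat.lt_or_ge s (t+1) with h' | h'
    · exact (rem_succ_subset hn pref horder t).trans (ih (Nat.lt_succ_iff.mp h'))
    · have : s = t + 1 := le_antisymm h h'
      subst this; exact subset_rfl

lemma rem_card (s : ℕ) :
    ((rrState n hn pref s).1).card = Fintype.card γ - s := by
  induction s with
  | zero => simp [rrState]
  | succ s ih =>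
    rcases step_cases hn pref horder s with ⟨he, hst⟩ | ⟨g, hg, hmin, hst⟩
    · rw [hst, ih]
      have : Fintype.card γ - s = 0 := by rw [← ih, he]; simp
      omega
    · rw [hst]
      have hpos : 0 < ((rrState n hn pref s).1).card := Finset.card_pos.mpr ⟨g, hg⟩
      simp only [Finset.card_erase_of_mem hg]
      omega

lemma disj (s : ℕ) (a : Fin n) :
    ∀ g ∈ (rrState n hn pref s).2 a, g ∉ (rrState n hn pref s).1 := by
  induction s with
  | zero => simp [rrState]
  | succ s ih =>
    rcases step_cases hn pref horder s with ⟨he, hst⟩ | ⟨g, hg, hmin, hst⟩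
    · rw [hst]; exact ih
    · rw [hst]
      intro g' hg' hg''
      simp only [Function.update_apply] at hg'
      have hg'rem : g' ∈ (rrState n hn pref s).1 :=
        Finset.mem_of_mem_erase hg''
      have hne : g' ≠ g := Finset.ne_of_mem_erase hg''
      by_cases hag : a = ag hn s
      · rw [if_pos hag] at hg'
        rcases Finset.mem_insert.mp hg' with h1 | h1
        · exact hne h1
        · exact ih _ (hag ▸ h1) hg'rem
      · rw [if_neg hag] at hg'
        exact ih _ hg' hg'rem

lemma bnd_mono {s t : ℕ} (h : s ≤ t) (a : Fin n) :
    (rrState n hn pref s).2 a ⊆ (rrState n hn pref t).2 a := by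
  induction t with
  | zero => simp_all
  | succ t ih =>
    rcases Nat.lt_or_ge s (t+1) with h' | h'
    · refine (ih (Nat.lt_succ_iff.mp h')).trans ?_
      rcases step_cases hn pref horder t with ⟨he, hst⟩ | ⟨g, hg, hmin, hst⟩
      · rw [hst]
      · rw [hst]
        simp only [Function.update_apply]
        by_cases hag : a = ag hn t
        · rw [if_pos hag, hag]; exact Finset.subset_insert _ _
        · rw [if_neg hag]
    · have : s = t + 1 := le_antisymm h h'
      subst this; exact subset_rfl

lemma bnd_subset {t s : ℕ} (h : t ≤ s) (a : Fin n) :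
    (rrState n hn pref s).2 a ⊆ (rrState n hn pref t).2 a ∪ (rrState n hn pref t).1 := by
  induction s with
  | zero =>
    have : t = 0 := Nat.le_zero.mp h
    subst this; exact Finset.subset_union_left
  | succ s ih =>
    rcases Nat.lt_or_ge t (s+1) with h' | h'
    · have ht : t ≤ s := Nat.lt_succ_iff.mp h'
      rcases step_cases hn pref horder s with ⟨he, hst⟩ | ⟨g, hg, hmin, hst⟩
      · rw [hst]; exact ih ht
      · rw [hst]
        intro g' hg'
        simp only [Function.update_apply] at hg'
        by_cases hag : a = ag hn s
        · rw [if_pos hag] at hg'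
          rcases Finset.mem_insert.mp hg' with h1 | h1
          · subst h1
            exact Finset.mem_union_right _ (rem_anti hn pref horder ht hg)
          · exact ih ht (hag ▸ h1)
        · rw [if_neg hag] at hg'
          exact ih ht hg'
    · have : t = s + 1 := le_antisymm h h'
      subst this; exact Finset.subset_union_left

lemma bnd_card (s : ℕ) (a : Fin n) :
    ((rrState n hn pref s).2 a).card ≤
      ((Finset.range s).filter (fun t => t % n = a.val)).card := by
  induction s with
  | zero => simp [rrState]
  | succ s ih =>
    have hsub : (Finset.range s).filter (fun t => t % n = a.val) ⊆
        (Finset.range (s+1)).filter (fun t => t % n = a.val) :=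
      Finset.filter_subset_filter _ (by simp [Finset.range_subset_range])
    rcases step_cases hn pref horder s with ⟨he, hst⟩ | ⟨g, hg, hmin, hst⟩
    · rw [hst]; exact ih.trans (Finset.card_le_card hsub)
    · rw [hst]
      simp only [Function.update_apply]
      by_cases hag : a = ag hn s
      · rw [if_pos hag]
        have hsmod : s % n = a.val := by rw [hag]; rfl
        have : (Finset.range (s+1)).filter (fun t => t % n = a.val) =
            insert s ((Finset.range s).filter (fun t => t % n = a.val)) := by
          rw [Finset.range_add_one, Finset.filter_insert, if_pos hsmod]
        rw [this, Finset.card_insert_of_notMem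
          (fun hmem => absurd (Finset.mem_filter.mp hmem).1 Finset.notMem_range_self)]
        refine (Finset.card_insert_le _ _).trans ?_
        rw [← hag]
        exact Nat.add_le_add_right ih 1
      · rw [if_neg hag]
        exact ih.trans (Finset.card_le_card hsub)

lemma state_const {s : ℕ} (h : Fintype.card γ ≤ s) :
    rrState n hn pref s = rrState n hn pref (Fintype.card γ) := by
  induction s with
  | zero => simp_all
  | succ s ih =>
    rcases Nat.lt_or_ge (Fintype.card γ) (s+1) with h' | h'
    · have hs : Fintype.card γ ≤ s := Nat.lt_succ_iff.mp h'
      have hrem : (rrState n hn pref s).1 = ∅ := by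
        have := rem_card hn pref horder s
        rw [Nat.sub_eq_zero_of_le hs] at this
        exact Finset.card_eq_zero.mp this
      rcases step_cases hn pref horder s with ⟨he, hst⟩ | ⟨g, hg, hmin, hst⟩
      · rw [hst]; exact ih hs
      · rw [hrem] at hg; simp at hg
    · have : Fintype.card γ = s + 1 := le_antisymm h h'
      rw [this]

lemma Dbound (pref' : Fin n → List γ) (horder' : ∀ a, IsOrder (pref' a))
    (C : Finset (Fin n)) (hhonest : ∀ a ∉ C, pref' a = pref a) :
    ∀ s, ((rrState n hn pref' s).1 \ (rrState n hn pref s).1).card ≤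
      ((Finset.range s).filter (fun t => (ag hn t : Fin n) ∈ C)).card := by
  intro s
  induction s with
  | zero => simp [rrState]
  | succ s ih =>
    set x := (rrState n hn pref s).1 with hx
    set y := (rrState n hn pref' s).1 with hy
    have hsub : (Finset.range s).filter (fun t => (ag hn t : Fin n) ∈ C) ⊆
        (Finset.range (s+1)).filter (fun t => (ag hn t : Fin n) ∈ C) :=
      Finset.filter_subset_filter _ (by simp [Finset.range_subset_range])
    by_cases hCmem : (ag hn s : Fin n) ∈ C
    · -- coalition stage
      have hcount : ((Finset.range (s+1)).filter (fun t => (ag hn t : Fin n) ∈ C)).card =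
          ((Finset.range s).filter (fun t => (ag hn t : Fin n) ∈ C)).card + 1 := by
        rw [Finset.range_add_one, Finset.filter_insert, if_pos hCmem,
          Finset.card_insert_of_notMem
            (fun hmem => absurd (Finset.mem_filter.mp hmem).1 Finset.notMem_range_self)]
      rw [hcount]
      have hy' : (rrState n hn pref' (s+1)).1 ⊆ y := rem_succ_subset hn pref' horder' s
      rcases step_cases hn pref horder s with ⟨he, hst⟩ | ⟨g, hg, hmin, hst⟩
      · have hx' : (rrState n hn pref (s+1)).1 = x := by rw [hst]
        refine le_trans (le_trans (Finset.card_le_card ?_) ih) (Nat.le_succ _)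
        rw [hx']
        exact Finset.sdiff_subset_sdiff hy' subset_rfl
      · have hx' : (rrState n hn pref (s+1)).1 = x.erase g := by rw [hst]
        have hss : (rrState n hn pref' (s+1)).1 \ (rrState n hn pref (s+1)).1 ⊆
            insert g (y \ x) := by
          intro h hh
          rw [hx'] at hh
          obtain ⟨hh1, hh2⟩ := Finset.mem_sdiff.mp hh
          by_cases hhg : h = g
          · exact Finset.mem_insert.mpr (Or.inl hhg)
          · refine Finset.mem_insert_of_mem (Finset.mem_sdiff.mpr ⟨hy' hh1, ?_⟩)
            intro hhx
            exact hh2 (Finset.mem_erase.mpr ⟨hhg, hhx⟩)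
        calc ((rrState n hn pref' (s+1)).1 \ (rrState n hn pref (s+1)).1).card
            ≤ (insert g (y \ x)).card := Finset.card_le_card hss
          _ ≤ (y \ x).card + 1 := Finset.card_insert_le _ _
          _ ≤ _ := Nat.add_le_add_right ih 1
    · -- honest stage
      have hcount : ((Finset.range (s+1)).filter (fun t => (ag hn t : Fin n) ∈ C)).card =
          ((Finset.range s).filter (fun t => (ag hn t : Fin n) ∈ C)).card := by
        rw [Finset.range_add_one, Finset.filter_insert, if_neg hCmem]
      rw [hcount]
      refine le_trans ?_ ih
      have hll : pref' (ag hn s) = pref (ag hn s) := hhonest _ hCmem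
      rcases step_cases hn pref horder s with ⟨he, hst⟩ | ⟨g, hg, hmin, hst⟩
      · -- x empty
        have hx' : (rrState n hn pref (s+1)).1 = x := by rw [hst]
        refine Finset.card_le_card ?_
        rw [hx']
        exact Finset.sdiff_subset_sdiff (rem_succ_subset hn pref' horder' s) subset_rfl
      · have hx' : (rrState n hn pref (s+1)).1 = x.erase g := by rw [hst]
        rcases step_cases hn pref' horder' s with ⟨he', hst'⟩ | ⟨g', hg', hmin', hst'⟩
        · -- y empty
          have hy'e : (rrState n hn pref' (s+1)).1 = y := by rw [hst']
          have hyempty : y = ∅ := he'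
          rw [hy'e, hyempty]
          simp
        · have hy'e : (rrState n hn pref' (s+1)).1 = y.erase g' := by rw [hst']
          rw [hy'e, hx']
          rw [hll] at hmin'
          by_cases hgy : g ∈ y
          · by_cases hgg : g' = g
            · subst hgg
              refine Finset.card_le_card ?_
              intro h hh
              obtain ⟨hh1, hh2⟩ := Finset.mem_sdiff.mp hh
              have hhy : h ∈ y := Finset.mem_of_mem_erase hh1
              have hhg : h ≠ g' := Finset.ne_of_mem_erase hh1
              refine Finset.mem_sdiff.mpr ⟨hhy, fun hhx => hh2 (Finset.mem_erase.mpr ⟨hhg, hhx⟩)⟩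
            · -- g' ≠ g
              have hglist : g ∈ pref (ag hn s) := (horder _).2 g
              have hg'list : g' ∈ pref (ag hn s) := (horder _).2 g'
              have hg'x : g' ∉ x := by
                intro hg'x
                have h1 := hmin g' hg'x
                have h2 := hmin' g hgy
                have : List.idxOf g (pref (ag hn s)) = List.idxOf g' (pref (ag hn s)) :=
                  le_antisymm (le_of_le_of_eq h1 rfl) h2
                exact hgg ((List.idxOf_inj hg'list).mp this.symm)
              have hg'yx : g' ∈ y \ x := Finset.mem_sdiff.mpr ⟨hg', hg'x⟩
              have hss : y.erase g' \ x.erase g ⊆ insert g ((y \ x).erase g') := by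
                intro h hh
                obtain ⟨hh1, hh2⟩ := Finset.mem_sdiff.mp hh
                have hhy : h ∈ y := Finset.mem_of_mem_erase hh1
                have hhg' : h ≠ g' := Finset.ne_of_mem_erase hh1
                by_cases hhg : h = g
                · exact hhg ▸ Finset.mem_insert_self _ _
                · refine Finset.mem_insert_of_mem (Finset.mem_erase.mpr ⟨hhg', Finset.mem_sdiff.mpr ⟨hhy, ?_⟩⟩)
                  intro hhx
                  exact hh2 (Finset.mem_erase.mpr ⟨hhg, hhx⟩)
              have hpos : 0 < (y \ x).card := Finset.card_pos.mpr ⟨g', hg'yx⟩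
              calc (y.erase g' \ x.erase g).card
                  ≤ (insert g ((y \ x).erase g')).card := Finset.card_le_card hss
                _ ≤ ((y \ x).erase g').card + 1 := Finset.card_insert_le _ _
                _ = ((y \ x).card - 1) + 1 := by rw [Finset.card_erase_of_mem hg'yx]
                _ = (y \ x).card := by omega
          · -- g ∉ y
            refine Finset.card_le_card ?_
            intro h hh
            obtain ⟨hh1, hh2⟩ := Finset.mem_sdiff.mp hh
            have hhy : h ∈ y := Finset.mem_of_mem_erase hh1
            have hhg : h ≠ g := fun e => hgy (e ▸ hhy)
            exact Finset.mem_sdiff.mpr ⟨hhy, fun hhx => hh2 (Finset.mem_erase.mpr ⟨hhg, hhx⟩)⟩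

omit horder in
lemma count_mod_le (n k i ia : ℕ) (hia : ia ≤ i) :
    ((Finset.range (k*n + ia)).filter (fun t => t % n = i)).card ≤ k := by
  have hmain : ∀ t, t < k*n + ia → t % n = i → t / n < k := by
    intro t ht htm
    by_contra hge
    push_neg at hge
    have h1 : n * (t / n) + t % n = t := Nat.div_add_mod t n
    have h2 : n * k ≤ n * (t / n) := Nat.mul_le_mul_left n hge
    have h3 : k * n = n * k := Nat.mul_comm k n
    omega
  conv_rhs => rw [← Finset.card_range k]
  apply Finset.card_le_card_of_injOn (fun t => t / n)
  · intro t ht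
    simp only [Finset.coe_filter, Set.mem_setOf_eq, Finset.mem_coe, Finset.mem_filter, Finset.mem_range] at ht ⊢
    exact hmain t ht.1 ht.2
  · intro t1 ht1 t2 ht2 heq
    simp only [Finset.coe_filter, Set.mem_setOf_eq, Finset.mem_range] at ht1 ht2
    simp only at heq
    have h1 : n * (t1 / n) + t1 % n = t1 := Nat.div_add_mod t1 n
    have h2 : n * (t2 / n) + t2 % n = t2 := Nat.div_add_mod t2 n
    rw [heq] at h1
    omega

omit horder in
lemma count_coal_le {n : ℕ} (hn : 0 < n) (C : Finset (Fin n)) (k ia : ℕ)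
    (hia : ∀ b ∈ C, ia ≤ b.val) :
    ((Finset.range (k*n + ia)).filter
      (fun t => (⟨t % n, Nat.mod_lt t hn⟩ : Fin n) ∈ C)).card ≤ C.card * k := by
  have hcard : C.card * k = (C ×ˢ Finset.range k).card := by
    rw [Finset.card_product, Finset.card_range]
  rw [hcard]
  have hmain : ∀ t, t < k*n + ia → (⟨t % n, Nat.mod_lt t hn⟩ : Fin n) ∈ C → t / n < k := by
    intro t ht htm
    have hile : ia ≤ t % n := hia _ htm
    by_contra hge
    push_neg at hge
    have h1 : n * (t / n) + t % n = t := Nat.div_add_mod t n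
    have h2 : n * k ≤ n * (t / n) := Nat.mul_le_mul_left n hge
    have h3 : k * n = n * k := Nat.mul_comm k n
    omega
  apply Finset.card_le_card_of_injOn
    (fun t => ((⟨t % n, Nat.mod_lt t hn⟩ : Fin n), t / n))
  · intro t ht
    simp only [Finset.coe_filter, Set.mem_setOf_eq, Finset.mem_coe, Finset.mem_filter, Finset.mem_range] at ht
    exact Finset.mem_product.mpr ⟨ht.2, Finset.mem_range.mpr (hmain t ht.1 ht.2)⟩
  · intro t1 ht1 t2 ht2 heq
    simp only [Prod.mk.injEq, Fin.mk.injEq] at heq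
    have h1 : n * (t1 / n) + t1 % n = t1 := Nat.div_add_mod t1 n
    have h2 : n * (t2 / n) + t2 % n = t2 := Nat.div_add_mod t2 n
    rw [heq.1, heq.2] at h1
    omega

omit horder in
lemma blo (q : ℕ) (hq : 0 < q) (F : ℕ → ℝ) (K : ℕ) :
    ∑ j ∈ Finset.range (q*K), F (j/q) = ∑ k ∈ Finset.range K, (q : ℝ) * F k := by
  induction K with
  | zero => simp
  | succ K ih =>
    have h1 : q * (K+1) = q*K + q := by ring
    rw [h1, Finset.range_eq_Ico,
      ← Finset.sum_Ico_consecutive (fun j => F (j/q)) (Nat.zero_le (q*K)) (Nat.le_add_right (q*K) q)]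
    have h2 : ∑ j ∈ Finset.Ico (q*K) (q*K + q), F (j/q) = (q : ℝ) * F K := by
      have hc : ∀ j ∈ Finset.Ico (q*K) (q*K + q), F (j/q) = F K := by
        intro j hj
        obtain ⟨hj1, hj2⟩ := Finset.mem_Ico.mp hj
        congr 1
        exact Nat.div_eq_of_lt_le
          (by have h := Nat.mul_comm K q; omega)
          (lt_of_lt_of_eq hj2 (by ring))
      rw [Finset.sum_congr rfl hc, Finset.sum_const, Nat.card_Ico]
      have : q*K + q - q*K = q := by omega
      rw [this, nsmul_eq_mul]
    rw [h2, ← Finset.range_eq_Ico, ih, Finset.sum_range_succ]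

omit horder in
lemma key_sort (w : ℕ → ℝ) (hwa : ∀ i j, i ≤ j → w j ≤ w i)
    (q : ℕ) (hq : 0 < q) (ρ : ℕ → ℕ) (A : Finset ℕ)
    (hcnt : ∀ k, q * k < A.card → (A.filter (fun i => i < ρ k)).card ≤ q * k) :
    ∑ i ∈ A, w i ≤ ∑ j ∈ Finset.range A.card, w (ρ (j / q)) := by
  induction A using Finset.induction_on_max with
  | empty => simp
  | insert a s hmax ih =>
    have has : a ∉ s := fun h => lt_irrefl a (hmax a h)
    rw [Finset.sum_insert has, Finset.card_insert_of_notMem has, Finset.sum_range_succ]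
    have hcnt' : ∀ k, q * k < s.card → (s.filter (fun i => i < ρ k)).card ≤ q * k := by
      intro k hk
      refine le_trans (Finset.card_le_card
        (Finset.filter_subset_filter _ (Finset.subset_insert a s))) ?_
      exact hcnt k (by rw [Finset.card_insert_of_notMem has]; omega)
    have hlast : w a ≤ w (ρ (s.card / q)) := by
      set k := s.card / q with hk
      have hqk : q * k ≤ s.card := by
        have h1 := Nat.div_mul_le_self s.card q
        have h2 : q * (s.card / q) = (s.card / q) * q := Nat.mul_comm _ _
        rw [hk]; omega
      have h2 := hcnt k (by rw [Finset.card_insert_of_notMem has]; omega)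
      rcases Nat.lt_or_ge a (ρ k) with hlt | hge
      · exfalso
        have hss : insert a s ⊆ (insert a s).filter (fun i => i < ρ k) := by
          intro i hi
          refine Finset.mem_filter.mpr ⟨hi, ?_⟩
          rcases Finset.mem_insert.mp hi with rfl | hi'
          · exact hlt
          · exact lt_trans (hmax i hi') hlt
        have hcard := Finset.card_le_card hss
        rw [Finset.card_insert_of_notMem has] at hcard
        omega
      · exact hwa _ _ hge
    have := ih hcnt'
    linarith

omit horder in
lemma ag_eq (a : Fin n) (k : ℕ) : ag hn (k*n + (a : ℕ)) = a := by
  apply Fin.ext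
  show (k*n + (a : ℕ)) % n = (a : ℕ)
  rw [Nat.add_comm, Nat.add_mul_mod_self_right, Nat.mod_eq_of_lt a.isLt]

variable [Inhabited γ]

def pk (a : Fin n) (k : ℕ) : γ :=
  ((pref a).find? (fun g =>
    decide (g ∈ (rrState n hn pref (k*n + (a : ℕ))).1))).getD default

lemma pick_spec (a : Fin n) (k : ℕ) (h : k*n + (a : ℕ) < Fintype.card γ) :
    pk hn pref a k ∈ (rrState n hn pref (k*n + (a : ℕ))).1 ∧
    (∀ g' ∈ (rrState n hn pref (k*n + (a : ℕ))).1,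
      (pref a).idxOf (pk hn pref a k) ≤ (pref a).idxOf g') ∧
    (rrState n hn pref (k*n + (a : ℕ) + 1)).2 a =
      insert (pk hn pref a k) ((rrState n hn pref (k*n + (a : ℕ))).2 a) := by
  have hne : (rrState n hn pref (k*n + (a : ℕ))).1.Nonempty := by
    rw [← Finset.card_pos, rem_card hn pref horder]
    omega
  cases hfind : (pref a).find? (fun g =>
      decide (g ∈ (rrState n hn pref (k*n + (a : ℕ))).1)) with
  | none =>
    exfalso
    obtain ⟨g, hg⟩ := hne
    have := List.find?_eq_none.mp hfind g ((horder a).2 g)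
    simp [hg] at this
  | some g =>
    have hpk : pk hn pref a k = g := by rw [pk, hfind]; rfl
    have hfind' : (pref (ag hn (k*n + (a : ℕ)))).find? (fun g =>
        decide (g ∈ (rrState n hn pref (k*n + (a : ℕ))).1)) = some g := by
      rw [ag_eq hn a k]; exact hfind
    have hp := List.find?_some hfind
    have hmem : g ∈ (rrState n hn pref (k*n + (a : ℕ))).1 := by simpa using hp
    have hstep := step_some hn pref (k*n + (a : ℕ)) hfind'
    refine ⟨hpk ▸ hmem, ?_, ?_⟩
    · intro g' hg'
      rw [hpk]
      exact find?_min hfind g' (decide_eq_true hg') ((horder a).2 g')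
    · rw [hstep, hpk]
      show Function.update _ (ag hn (k*n + (a : ℕ))) _ a = _
      rw [ag_eq hn a k, Function.update_self]

lemma sum_picks (v : γ → ℝ) (hv0 : ∀ g, 0 ≤ v g) (a : Fin n) (K : ℕ)
    (hK : ∀ k, k < K → k*n + (a : ℕ) < Fintype.card γ) :
    ∑ k ∈ Finset.range K, v (pk hn pref a k) ≤
      ∑ g ∈ (rrState n hn pref (Fintype.card γ)).2 a, v g := by
  have main : ∀ K', (∀ k, k < K' → k*n + (a : ℕ) < Fintype.card γ) →
      ∑ k ∈ Finset.range K', v (pk hn pref a k) ≤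
        ∑ g ∈ (rrState n hn pref (K'*n + (a : ℕ))).2 a, v g := by
    intro K'
    induction K' with
    | zero => intro _; exact Finset.sum_nonneg (fun g _ => hv0 g)
    | succ K' ih =>
      intro hK'
      obtain ⟨hpmem, hpmin, hpins⟩ := pick_spec hn pref horder a K' (hK' K' (Nat.lt_succ_self _))
      have hnotmem : pk hn pref a K' ∉ (rrState n hn pref (K'*n + (a : ℕ))).2 a :=
        fun hmem => disj hn pref horder _ a _ hmem hpmem
      rw [Finset.sum_range_succ]
      calc ∑ k ∈ Finset.range K', v (pk hn pref a k) + v (pk hn pref a K')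
          ≤ (∑ g ∈ (rrState n hn pref (K'*n + (a : ℕ))).2 a, v g) + v (pk hn pref a K') := by
            have := ih (fun k hk => hK' k (Nat.lt_succ_of_lt hk))
            linarith
        _ = ∑ g ∈ (rrState n hn pref (K'*n + (a : ℕ) + 1)).2 a, v g := by
            rw [hpins, Finset.sum_insert hnotmem]; ring
        _ ≤ ∑ g ∈ (rrState n hn pref ((K'+1)*n + (a : ℕ))).2 a, v g := by
            refine Finset.sum_le_sum_of_subset_of_nonneg
              (bnd_mono hn pref horder ?_ a) (fun g _ _ => hv0 g)
            have : (K'+1)*n = K'*n + n := by ring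
            omega
  refine le_trans (main K hK) ?_
  rcases Nat.le_total (K*n + (a : ℕ)) (Fintype.card γ) with hle | hle
  · exact Finset.sum_le_sum_of_subset_of_nonneg
      (bnd_mono hn pref horder hle a) (fun g _ _ => hv0 g)
  · rw [state_const hn pref horder hle]

end RRP

set_option maxHeartbeats 1000000 in
/-- GIR upper bound `c + 1` for Round-Robin. -/
theorem stmt14 (c : ℕ) (hc : 1 ≤ c) (n m : ℕ) (hn : 0 < n)
    (v : Fin n → Fin m → ℝ) (hv : ∀ a g, 0 ≤ v a g)
    (pref pref' : Fin n → List (Fin m))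
    (horder : ∀ a, IsOrder (pref a)) (horder' : ∀ a, IsOrder (pref' a))
    (hcons : ∀ a, Consistent (v a) (pref a))
    (C : Finset (Fin n)) (hCne : C.Nonempty) (hC : C.card ≤ c)
    (hhonest : ∀ a ∉ C, pref' a = pref a) :
    ∃ a ∈ C, (∑ g ∈ rr n hn pref' a, v a g) ≤
      ((c : ℝ) + 1) * ∑ g ∈ rr n hn pref a, v a g := by
  classical
  obtain ⟨a, haC, hamin⟩ := C.exists_min_image (fun b => (b : ℕ)) hCne
  refine ⟨a, haC, ?_⟩
  rcases Nat.eq_zero_or_pos m with hm0 | hm0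
  · subst hm0
    have h1 : rr n hn pref' a = ∅ := Finset.eq_empty_of_isEmpty _
    have h2 : rr n hn pref a = ∅ := Finset.eq_empty_of_isEmpty _
    rw [h1, h2]
    simp
  haveI : Inhabited (Fin m) := ⟨⟨0, hm0⟩⟩
  set M := Fintype.card (Fin m) with hM
  set S : Finset (Fin m) := rr n hn pref a with hS
  set S' : Finset (Fin m) := rr n hn pref' a with hS'
  set q := c + 1 with hqdef
  have hq : 0 < q := Nat.succ_pos c
  set l := pref a with hl
  have hlnd : l.Nodup := (horder a).1
  have hlmem : ∀ g, g ∈ l := (horder a).2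
  set ord : Fin m → ℕ := fun g => l.idxOf g with hord
  set w : ℕ → ℝ := fun i => if h : i < l.length then v a (l[i]'h) else 0 with hw
  have hw_ord : ∀ g : Fin m, w (ord g) = v a g := by
    intro g
    have hlt : l.idxOf g < l.length := List.idxOf_lt_length_iff.mpr (hlmem g)
    simp only [hw, hord, dif_pos hlt]
    congr 1
    exact List.getElem_idxOf hlt
  have hw0 : ∀ i, 0 ≤ w i := by
    intro i
    simp only [hw]
    split
    · exact hv a _
    · exact le_rfl
  have hwa : ∀ i j, i ≤ j → w j ≤ w i := by
    intro i j hij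
    by_cases hjlt : j < l.length
    · have hilt : i < l.length := lt_of_le_of_lt hij hjlt
      simp only [hw, dif_pos hjlt, dif_pos hilt]
      by_contra hgt
      push_neg at hgt
      have := hcons a _ _ hgt
      rw [List.Nodup.idxOf_getElem hlnd, List.Nodup.idxOf_getElem hlnd] at this
      omega
    · have : w j = 0 := by simp only [hw, dif_neg hjlt]
      rw [this]
      exact hw0 i
  set ρ : ℕ → ℕ := fun k => ord (RRP.pk hn pref a k) with hρ
  set A : Finset ℕ := S'.image ord with hA
  have hordinj : ∀ x ∈ S', ∀ y ∈ S', ord x = ord y → x = y :=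
    fun x _ y _ hxy => (List.idxOf_inj (hlmem x)).mp hxy
  have hAcard : A.card = S'.card := Finset.card_image_of_injOn hordinj
  have hsum' : ∑ g ∈ S', v a g = ∑ i ∈ A, w i := by
    rw [hA, Finset.sum_image hordinj]
    exact (Finset.sum_congr rfl (fun g _ => hw_ord g)).symm
  -- every pick index of a is a valid stage
  have hS'K : ∀ j, j < S'.card → j * n + (a : ℕ) < M := by
    intro j hj
    by_contra hge
    push_neg at hge
    have h1 : S'.card ≤ ((Finset.range M).filter (fun t => t % n = (a : ℕ))).card :=
      RRP.bnd_card hn pref' horder' M a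
    have h2 : ((Finset.range M).filter (fun t => t % n = (a : ℕ))).card ≤ j := by
      refine le_trans (Finset.card_le_card (Finset.filter_subset_filter _
        (Finset.range_subset_range.mpr hge))) ?_
      exact RRP.count_mod_le n j (a : ℕ) (a : ℕ) le_rfl
    omega
  -- the key counting bound
  have hcnt : ∀ k, q * k < A.card → (A.filter (fun i => i < ρ k)).card ≤ q * k := by
    intro k hk
    have hkS' : k < S'.card := by
      have : k ≤ q * k := Nat.le_mul_of_pos_left k hq
      omega
    have hsk : k * n + (a : ℕ) < M := hS'K k hkS'
    obtain ⟨hpmem, hpmin, hpins⟩ := RRP.pick_spec hn pref horder a k hsk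
    have himg : A.filter (fun i => i < ρ k) = (S'.filter (fun g => ord g < ρ k)).image ord := by
      rw [hA, Finset.filter_image]
    have hicard : (A.filter (fun i => i < ρ k)).card =
        (S'.filter (fun g => ord g < ρ k)).card := by
      rw [himg]
      exact Finset.card_image_of_injOn (fun x hx y hy =>
        hordinj x (Finset.mem_filter.mp hx).1 y (Finset.mem_filter.mp hy).1)
    rw [hicard]
    -- S' ⊆ bundle at stage s_k ∪ remaining at s_k
    have hsplit : S'.filter (fun g => ord g < ρ k) ⊆
        (rrState n hn pref' (k*n + (a : ℕ))).2 a ∪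
          ((rrState n hn pref' (k*n + (a : ℕ))).1 \ (rrState n hn pref (k*n + (a : ℕ))).1) := by
      intro g hg
      obtain ⟨hgS', hgord⟩ := Finset.mem_filter.mp hg
      have hgsub : g ∈ (rrState n hn pref' (k*n + (a : ℕ))).2 a ∪
          (rrState n hn pref' (k*n + (a : ℕ))).1 :=
        RRP.bnd_subset hn pref' horder' (le_of_lt hsk) a hgS'
      rcases Finset.mem_union.mp hgsub with h1 | h1
      · exact Finset.mem_union_left _ h1
      · refine Finset.mem_union_right _ (Finset.mem_sdiff.mpr ⟨h1, fun hgrem => ?_⟩)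
        have := hpmin g hgrem
        simp only [hρ, hord] at hgord
        rw [← hl] at this
        omega
    have hbndcard : ((rrState n hn pref' (k*n + (a : ℕ))).2 a).card ≤ k := by
      refine le_trans (RRP.bnd_card hn pref' horder' (k*n + (a : ℕ)) a) ?_
      exact RRP.count_mod_le n k (a : ℕ) (a : ℕ) le_rfl
    have hdcard : (((rrState n hn pref' (k*n + (a : ℕ))).1 \
        (rrState n hn pref (k*n + (a : ℕ))).1)).card ≤ c * k := by
      refine le_trans (RRP.Dbound hn pref horder pref' horder' C hhonest (k*n + (a : ℕ))) ?_
      refine le_trans ?_ (Nat.mul_le_mul_right k hC)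
      exact RRP.count_coal_le hn C k (a : ℕ) (fun b hb => hamin b hb)
    calc (S'.filter (fun g => ord g < ρ k)).card
        ≤ ((rrState n hn pref' (k*n + (a : ℕ))).2 a ∪
            ((rrState n hn pref' (k*n + (a : ℕ))).1 \
              (rrState n hn pref (k*n + (a : ℕ))).1)).card := Finset.card_le_card hsplit
      _ ≤ ((rrState n hn pref' (k*n + (a : ℕ))).2 a).card +
            (((rrState n hn pref' (k*n + (a : ℕ))).1 \
              (rrState n hn pref (k*n + (a : ℕ))).1)).card := Finset.card_union_le _ _
      _ ≤ k + c * k := Nat.add_le_add hbndcard hdcard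
      _ = q * k := by rw [hqdef]; ring
  have hKsum : ∑ k ∈ Finset.range A.card, w (ρ k) ≤ ∑ g ∈ S, v a g := by
    have : ∀ k ∈ Finset.range A.card, w (ρ k) = v a (RRP.pk hn pref a k) :=
      fun k _ => hw_ord _
    rw [Finset.sum_congr rfl this]
    exact RRP.sum_picks hn pref horder (v a) (hv a) a A.card
      (fun k hk => hS'K k (by omega))
  calc ∑ g ∈ S', v a g = ∑ i ∈ A, w i := hsum'
    _ ≤ ∑ j ∈ Finset.range A.card, w (ρ (j / q)) :=
        RRP.key_sort w hwa q hq ρ A hcnt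
    _ ≤ ∑ j ∈ Finset.range (q * A.card), w (ρ (j / q)) := by
        refine Finset.sum_le_sum_of_subset_of_nonneg
          (Finset.range_subset_range.mpr (Nat.le_mul_of_pos_left _ hq)) (fun j _ _ => hw0 _)
    _ = ∑ k ∈ Finset.range A.card, (q : ℝ) * w (ρ k) := RRP.blo q hq (fun k => w (ρ k)) A.card
    _ = (q : ℝ) * ∑ k ∈ Finset.range A.card, w (ρ k) := by rw [Finset.mul_sum]
    _ ≤ (q : ℝ) * ∑ g ∈ S, v a g := by
        refine mul_le_mul_of_nonneg_left hKsum (by positivity)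
    _ = ((c : ℝ) + 1) * ∑ g ∈ S, v a g := by
        rw [hqdef]
        push_cast
        ring
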